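/- Let F be a finite set, u₀ ∈ F, and let X be a connected ergodic grading of k^F by a group Γ. Then the support of the grading (the set of s with (k^F)_s ≠ 0) equals all of Γ, the normalized homogeneous elements {a_s}_{s∈Γ} form a multiplicative basis of k^F, and k^F is isomorphic as a Γ-graded algebra to the group algebra kΓ. -/

import Mathlib

/-- Let `F` be a finite set, `u₀ ∈ F`, and let `𝒜` be a connected ergodic
grading of `k^F = (F → k)` by a group `Γ`.  Then the support of the grading is all of `Γ`,
the normalised homogeneous elements `{a_s}_{s ∈ Γ}` form a multiplicative basis of `k^F`,
and `k^F` is isomorphic, as an algebra, to the group algebra `kΓ`, matching `a_s` with `s`. -/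
theorem connected_ergodic_grading_is_group_algebra
    {k F Γ : Type*} [Field k] [Fintype F] [Group Γ] [DecidableEq Γ]
    (u₀ : F) (𝒜 : Γ → Submodule k (F → k))
    (hdecomp : DirectSum.IsInternal 𝒜)
    (hmul : ∀ s t : Γ, ∀ a ∈ 𝒜 s, ∀ b ∈ 𝒜 t, a * b ∈ 𝒜 (s * t))
    (hone : (1 : F → k) ∈ 𝒜 1)
    (hergodic : Module.finrank k (𝒜 1) = 1)
    (hconn : Subgroup.closure {s : Γ | 𝒜 s ≠ ⊥} = ⊤) :
    (∀ s : Γ, 𝒜 s ≠ ⊥) ∧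
    ∃ a : Γ → (F → k),
      (∀ s : Γ, a s ∈ 𝒜 s ∧ a s u₀ = 1) ∧
      (∀ s t : Γ, a s * a t = a (s * t)) ∧
      (∃ b : Module.Basis Γ k (F → k), ∀ s : Γ, b s = a s) ∧
      ∃ iso : (F → k) ≃ₐ[k] MonoidAlgebra k Γ,
        ∀ s : Γ, iso (a s) = MonoidAlgebra.single s 1 := by
  classical
  have hne : Nonempty F := ⟨u₀⟩
  have h1ne : (1 : F → k) ≠ 0 := one_ne_zero
  -- the trivial component is spanned by 1
  have hA1 : 𝒜 1 = Submodule.span k {(1 : F → k)} := by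
    symm
    apply Submodule.eq_of_le_of_finrank_eq
    · rwa [Submodule.span_singleton_le_iff_mem]
    · rw [finrank_span_singleton h1ne, hergodic]
  have hone1 : ∀ x ∈ 𝒜 1, ∃ c : k, x = c • (1 : F → k) := by
    intro x hx
    rw [hA1, Submodule.mem_span_singleton] at hx
    obtain ⟨c, hc⟩ := hx
    exact ⟨c, hc.symm⟩
  -- powers of homogeneous elements are homogeneous
  have hpow : ∀ s : Γ, ∀ a ∈ 𝒜 s, ∀ n : ℕ, a ^ n ∈ 𝒜 (s ^ n) := by
    intro s a ha n
    induction n with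
    | zero => simpa using hone
    | succ n ih => rw [pow_succ, pow_succ]; exact hmul _ _ _ ih _ ha
  -- no nilpotents in k^F
  have hpowne : ∀ x : F → k, x ≠ 0 → ∀ n : ℕ, x ^ n ≠ 0 := by
    intro x hx n
    obtain ⟨u, hu⟩ := Function.ne_iff.1 hx
    simp only [Pi.zero_apply] at hu
    intro h0
    have h1 : (x ^ n) u = 0 := by rw [h0]; rfl
    rw [Pi.pow_apply] at h1
    exact pow_ne_zero n hu h1
  -- the support is a finite set
  have hind := hdecomp.submodule_iSupIndep
  have hfin : {s : Γ | 𝒜 s ≠ ⊥}.Finite :=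
    WellFoundedGT.finite_ne_bot_of_iSupIndep hind
  -- key lemma: a power of any nonzero homogeneous element is a nonzero scalar
  have key : ∀ s : Γ, ∀ a ∈ 𝒜 s, a ≠ 0 →
      ∃ d : ℕ, 0 < d ∧ s ^ d = 1 ∧ ∃ c : k, c ≠ 0 ∧ a ^ d = c • (1 : F → k) := by
    intro s a ha hane
    have hmem : ∀ n : ℕ, s ^ n ∈ {s : Γ | 𝒜 s ≠ ⊥} := by
      intro n hbot
      have h2 := hpow s a ha n
      rw [hbot, Submodule.mem_bot] at h2
      exact hpowne a hane n h2
    have hninj : ¬ Function.Injective (fun n : ℕ => s ^ n) := by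
      intro hinj
      exact (Set.infinite_of_injective_forall_mem hinj hmem) hfin
    rw [Function.not_injective_iff] at hninj
    obtain ⟨i, j, hij, hne'⟩ := hninj
    -- wlog m < n
    have hkey2 : ∀ m n : ℕ, m < n → s ^ m = s ^ n →
        ∃ d : ℕ, 0 < d ∧ s ^ d = 1 := by
      intro m n hmn heq
      refine ⟨n - m, Nat.sub_pos_of_lt hmn, ?_⟩
      have h3 : s ^ m * s ^ (n - m) = s ^ m * 1 := by
        rw [mul_one, ← pow_add, Nat.add_sub_cancel' hmn.le, heq]
      exact mul_left_cancel h3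
    have hd : ∃ d : ℕ, 0 < d ∧ s ^ d = 1 := by
      rcases lt_or_gt_of_ne hne' with h | h
      · exact hkey2 i j h hij
      · exact hkey2 j i h hij.symm
    obtain ⟨d, hdpos, hd1⟩ := hd
    have h4 : a ^ d ∈ 𝒜 1 := hd1 ▸ hpow s a ha d
    obtain ⟨c, hc⟩ := hone1 _ h4
    refine ⟨d, hdpos, hd1, c, ?_, hc⟩
    intro hc0
    rw [hc0, zero_smul] at hc
    exact hpowne a hane d hc
  -- nonzero homogeneous elements vanish nowhere
  have hval : ∀ s : Γ, ∀ a ∈ 𝒜 s, a ≠ 0 → ∀ u : F, a u ≠ 0 := by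
    intro s a ha hane u h0
    obtain ⟨d, hdpos, -, c, hc, hcd⟩ := key s a ha hane
    have h5 : (a ^ d) u = c := by rw [hcd]; simp
    rw [Pi.pow_apply, h0, zero_pow hdpos.ne'] at h5
    exact hc h5.symm
  -- nonzero homogeneous elements have homogeneous inverses
  have hinvmem : ∀ s : Γ, ∀ a ∈ 𝒜 s, a ≠ 0 → ∃ b ∈ 𝒜 s⁻¹, a * b = 1 := by
    intro s a ha hane
    obtain ⟨d, hdpos, hs1, c, hc, hcd⟩ := key s a ha hane
    have hsd : s ^ (d - 1) = s⁻¹ := by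
      have h6 : s ^ (d - 1) * s = 1 := by
        rw [← pow_succ, Nat.sub_add_cancel hdpos, hs1]
      exact eq_inv_of_mul_eq_one_left h6
    refine ⟨c⁻¹ • a ^ (d - 1), Submodule.smul_mem _ _ (hsd ▸ hpow s a ha (d - 1)), ?_⟩
    rw [mul_smul_comm, ← pow_succ', Nat.sub_add_cancel hdpos, hcd, smul_smul,
      inv_mul_cancel₀ hc, one_smul]
  -- the support is a subgroup, hence all of Γ by connectedness
  let S : Subgroup Γ :=
    { carrier := {s : Γ | 𝒜 s ≠ ⊥}
      one_mem' := by
        show 𝒜 1 ≠ ⊥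
        rw [Submodule.ne_bot_iff]
        exact ⟨1, hone, h1ne⟩
      mul_mem' := by
        intro s t hs ht
        rw [Set.mem_setOf_eq, Submodule.ne_bot_iff] at hs ht ⊢
        obtain ⟨x, hx, hxne⟩ := hs
        obtain ⟨y, hy, hyne⟩ := ht
        refine ⟨x * y, hmul _ _ _ hx _ hy, ?_⟩
        have h7 : (x * y) u₀ ≠ 0 := by
          rw [Pi.mul_apply]
          exact mul_ne_zero (hval s x hx hxne u₀) (hval t y hy hyne u₀)
        exact fun h0 => h7 (by rw [h0]; rfl)
      inv_mem' := by
        intro s hs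
        rw [Set.mem_setOf_eq, Submodule.ne_bot_iff] at hs ⊢
        obtain ⟨x, hx, hxne⟩ := hs
        obtain ⟨y, hy, hxy⟩ := hinvmem s x hx hxne
        refine ⟨y, hy, ?_⟩
        intro h0
        rw [h0, mul_zero] at hxy
        exact h1ne hxy.symm }
  have hsupp : ∀ s : Γ, 𝒜 s ≠ ⊥ := by
    have hle : Subgroup.closure {s : Γ | 𝒜 s ≠ ⊥} ≤ S :=
      (Subgroup.closure_le S).mpr (fun x hx => hx)
    rw [hconn] at hle
    exact fun s => hle (Subgroup.mem_top s)
  -- choose the normalised homogeneous elements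
  have hch : ∀ s : Γ, ∃ x, x ∈ 𝒜 s ∧ x ≠ 0 :=
    fun s => (Submodule.ne_bot_iff _).1 (hsupp s)
  choose w hw hwne using hch
  set a : Γ → (F → k) := fun s => (w s u₀)⁻¹ • w s with ha_def
  have amem : ∀ s : Γ, a s ∈ 𝒜 s := fun s => Submodule.smul_mem _ _ (hw s)
  have aval : ∀ s : Γ, a s u₀ = 1 := by
    intro s
    simp only [ha_def, Pi.smul_apply, smul_eq_mul]
    exact inv_mul_cancel₀ (hval s (w s) (hw s) (hwne s) u₀)
  have ane : ∀ s : Γ, a s ≠ 0 := by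
    intro s h0
    have := aval s
    rw [h0] at this
    simp at this
  -- each component is one-dimensional, spanned by a s
  have huniq : ∀ s : Γ, ∀ x ∈ 𝒜 s, x = x u₀ • a s := by
    intro s x hx
    by_contra hcnt
    have hy : x - x u₀ • a s ∈ 𝒜 s :=
      Submodule.sub_mem _ hx (Submodule.smul_mem _ _ (amem s))
    have hyne : x - x u₀ • a s ≠ 0 := fun h => hcnt (sub_eq_zero.mp h)
    apply hval s _ hy hyne u₀
    simp [aval s]
  have hmula : ∀ s t : Γ, a s * a t = a (s * t) := by
    intro s t
    have h8 := huniq (s * t) _ (hmul _ _ _ (amem s) _ (amem t))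
    rwa [Pi.mul_apply, aval s, aval t, one_mul, one_smul] at h8
  have ha1 : a 1 = 1 := by
    have h9 := huniq 1 1 hone
    rw [Pi.one_apply, one_smul] at h9
    exact h9.symm
  -- the a s form a basis
  have hli : LinearIndependent k a := hind.linearIndependent 𝒜 amem ane
  have hsp : ⊤ ≤ Submodule.span k (Set.range a) := by
    rw [Submodule.span_range_eq_iSup, ← hdecomp.submodule_iSup_eq_top]
    refine iSup_mono fun s => ?_
    intro x hx
    rw [Submodule.mem_span_singleton]
    exact ⟨x u₀, (huniq s x hx).symm⟩
  let b : Module.Basis Γ k (F → k) := Module.Basis.mk hli hsp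
  -- the algebra map from the group algebra
  let m : Γ →* (F → k) :=
    { toFun := a
      map_one' := ha1
      map_mul' := fun s t => (hmula s t).symm }
  let f : MonoidAlgebra k Γ →ₐ[k] (F → k) := MonoidAlgebra.lift k (F → k) Γ m
  have hf : ∀ s : Γ, f (MonoidAlgebra.single s 1) = a s := by
    intro s
    simp only [f, MonoidAlgebra.lift_single, one_smul]
    rfl
  let bb : Module.Basis Γ k (MonoidAlgebra k Γ) := MonoidAlgebra.basis Γ k
  have hbb : ∀ s : Γ, bb s = MonoidAlgebra.single s 1 := fun s => rfl
  have heq : f.toLinearMap = (bb.equiv b (Equiv.refl Γ)).toLinearMap := by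
    apply bb.ext
    intro s
    rw [LinearEquiv.coe_coe, Module.Basis.equiv_apply, AlgHom.toLinearMap_apply, hbb, hf,
      Equiv.refl_apply]
    exact (Module.Basis.mk_apply hli hsp s).symm
  have hfb : Function.Bijective f := by
    have h10 : Function.Bijective f.toLinearMap := by
      rw [heq]
      exact (bb.equiv b (Equiv.refl Γ)).bijective
    exact h10
  let e : MonoidAlgebra k Γ ≃ₐ[k] (F → k) := AlgEquiv.ofBijective f hfb
  refine ⟨hsupp, a, fun s => ⟨amem s, aval s⟩, hmula,
    ⟨b, fun s => Module.Basis.mk_apply hli hsp s⟩, e.symm, fun s => ?_⟩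
  have h11 : e (MonoidAlgebra.single s 1) = a s := hf s
  rw [← h11, AlgEquiv.symm_apply_apply]
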